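/- In a bipartite instance H with strict preference lists, if M is a popular matching and v is a vertex that is matched in every stable matching of H, then v is matched in M. -/

import Mathlib

open Finset

section Defs
variable {V : Type*}

/-- A matching given as a partial partner function: if `M u = some v` then
`(u,v)` is an edge and `v`'s partner is `u`. -/
def IsMatching (adj : V → V → Prop) (M : V → Option V) : Prop :=
  ∀ u v, M u = some v → adj u v ∧ M v = some u

/-- Vertex `u` prefers matching `M` to `M'`: matched in `M` and unmatched in `M'`,
or matched in both and prefers its `M`-partner. -/
def PrefersM (pref : V → V → V → Bool) (M M' : V → Option V) (u : V) : Bool :=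
  match M u, M' u with
  | some a, some b => pref u a b
  | some _, none => true
  | _, _ => false

/-- `phiM pref M M'` = number of vertices preferring `M` to `M'`. -/
def phiM [Fintype V] (pref : V → V → V → Bool) (M M' : V → Option V) : ℕ :=
  (Finset.univ.filter fun u => PrefersM pref M M' u = true).card

/-- `M` is popular: no matching is preferred by strictly more vertices. -/
def Popular [Fintype V] (adj : V → V → Prop) (pref : V → V → V → Bool)
    (M : V → Option V) : Prop :=
  ∀ M', IsMatching adj M' → phiM pref M' M ≤ phiM pref M M'

/-- `a` prefers `b` to its assignment under `M` (being unmatched is worst). -/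
def PrefOver (pref : V → V → V → Bool) (M : V → Option V) (a b : V) : Prop :=
  match M a with
  | none => True
  | some c => pref a b c = true

/-- `(a,b)` is a blocking edge with respect to `M`. -/
def Blocking (adj : V → V → Prop) (pref : V → V → V → Bool) (M : V → Option V)
    (a b : V) : Prop :=
  adj a b ∧ PrefOver pref M a b ∧ PrefOver pref M b a

/-- Number of matched vertices (twice the number of edges of `M`). -/
def msize [Fintype V] (M : V → Option V) : ℕ :=
  (Finset.univ.filter fun u => (M u).isSome = true).card

/-- `vote u v v'` where `u` itself encodes "unmatched"; every vertex regards
itself as strictly worse than any neighbor. -/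
def vote [DecidableEq V] (pref : V → V → V → Bool) (u v v' : V) : ℤ :=
  if v = v' then 0
  else if v' = u then 1
  else if v = u then -1
  else if pref u v v' then 1 else -1

/-- `wt_M(a,b) = vote_a(b, M̃(a)) + vote_b(a, M̃(b))`. -/
def wtEdge [DecidableEq V] (pref : V → V → V → Bool) (M : V → Option V) (a b : V) : ℤ :=
  vote pref a b ((M a).getD a) + vote pref b a ((M b).getD b)

/-- `wt_M(u,u)`: 0 if `u` is unmatched in `M`, else −1. -/
def wtSelf (M : V → Option V) (u : V) : ℤ :=
  if (M u).isSome then -1 else 0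

end Defs

/-- In a bipartite instance, every popular matching matches any vertex that is
matched in every stable matching. -/
theorem popular_matches_stable_vertex {V : Type*} [Fintype V] [DecidableEq V]
    (adj : V → V → Prop) (hsymm : ∀ u v, adj u v → adj v u) (hadjirr : ∀ u, ¬ adj u u)
    (side : V → Bool) (hbip : ∀ u v, adj u v → side u ≠ side v)
    (pref : V → V → V → Bool)
    (hpirr : ∀ u a, pref u a a = false)
    (hasym : ∀ u a b, pref u a b = true → pref u b a = false)
    (htrans : ∀ u a b c, pref u a b = true → pref u b c = true → pref u a c = true)
    (htot : ∀ u a b, adj u a → adj u b → a ≠ b → pref u a b = true ∨ pref u b a = true)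
    (hexists : ∃ S, IsMatching adj S ∧ ∀ a b, ¬ Blocking adj pref S a b)
    (M : V → Option V) (hM : IsMatching adj M) (hpop : Popular adj pref M)
    (v : V)
    (hv : ∀ S, IsMatching adj S → (∀ a b, ¬ Blocking adj pref S a b) → (S v).isSome) :
    (M v).isSome := by
  by_contra hMv
  rw [Option.not_isSome_iff_eq_none] at hMv
  obtain ⟨S, hS, hSstab⟩ := hexists
  have hSv := hv S hS hSstab
  -- key: if u prefers M over S, then u's M-partner prefers S over M
  have key : ∀ u w, M u = some w → PrefersM pref M S u = true →
      PrefersM pref S M w = true := by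
    intro u w hMu hu
    have hMw : M w = some u := (hM u w hMu).2
    have hadjuw : adj u w := (hM u w hMu).1
    by_contra hcon
    apply hSstab u w
    refine ⟨hadjuw, ?_, ?_⟩
    · unfold PrefOver
      cases hSu : S u with
      | none => trivial
      | some x =>
        simp only [PrefersM, hMu, hSu] at hu
        exact hu
    · unfold PrefOver
      cases hSw : S w with
      | none => trivial
      | some y =>
        simp only [PrefersM, hSw, hMw] at hcon
        have hyu : y ≠ u := by
          intro heq
          rw [heq] at hSw
          have hSu : S u = some w := (hS w u hSw).2
          simp only [PrefersM, hMu, hSu] at hu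
          rw [hpirr u w] at hu
          exact Bool.false_ne_true hu
        have hadjwy : adj w y := (hS w y hSw).1
        have hadjwu := hsymm u w hadjuw
        rcases htot w u y hadjwu hadjwy (fun h => hyu h.symm) with h | h
        · exact h
        · exact absurd h hcon
  -- if u prefers M over S then M u is some
  have hsome : ∀ u, PrefersM pref M S u = true → ∃ w, M u = some w := by
    intro u hu
    cases hMu : M u with
    | none => simp only [PrefersM, hMu] at hu; exact Bool.noConfusion hu
    | some w => exact ⟨w, rfl⟩
  classical
  set A := univ.filter (fun u => PrefersM pref M S u = true) with hA
  set B := univ.filter (fun u => PrefersM pref S M u = true) with hB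
  set g : V → V := fun u => (M u).getD u with hg
  have hmapsto : ∀ u ∈ A, g u ∈ B.erase v := by
    intro u hu
    rw [hA, mem_filter] at hu
    obtain ⟨w, hMu⟩ := hsome u hu.2
    have hgw : g u = w := by rw [hg]; simp [hMu]
    rw [hgw, Finset.mem_erase]
    constructor
    · intro heq
      have hMw : M w = some u := (hM u w hMu).2
      rw [heq, hMv] at hMw
      exact Option.some_ne_none u hMw.symm
    · rw [hB, mem_filter]
      exact ⟨mem_univ _, key u w hMu hu.2⟩
  have hinj : Set.InjOn g A := by
    intro u1 hu1 u2 hu2 heq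
    rw [Finset.mem_coe, hA, mem_filter] at hu1 hu2
    obtain ⟨w1, h1⟩ := hsome u1 hu1.2
    obtain ⟨w2, h2⟩ := hsome u2 hu2.2
    have e1 : g u1 = w1 := by rw [hg]; simp [h1]
    have e2 : g u2 = w2 := by rw [hg]; simp [h2]
    have hw : w1 = w2 := by rw [← e1, ← e2, heq]
    have p1 : M w1 = some u1 := (hM u1 w1 h1).2
    have p2 : M w2 = some u2 := (hM u2 w2 h2).2
    rw [hw, p2] at p1
    exact (Option.some.injEq _ _ ▸ p1).symm
  have hvB : v ∈ B := by
    rw [hB, mem_filter]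
    refine ⟨mem_univ _, ?_⟩
    obtain ⟨sv, hsv⟩ := Option.isSome_iff_exists.mp hSv
    simp only [PrefersM, hsv, hMv]
  have hcard : A.card < B.card := by
    calc A.card = (A.image g).card := (Finset.card_image_of_injOn hinj).symm
    _ ≤ (B.erase v).card := Finset.card_le_card (fun x hx => by
        obtain ⟨u, hu, rfl⟩ := Finset.mem_image.mp hx
        exact hmapsto u hu)
    _ < B.card := Finset.card_erase_lt_of_mem hvB
  have hpopS := hpop S hS
  unfold phiM at hpopS
  rw [← hA, ← hB] at hpopS
  omega
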